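/- Define f : ℝ → ℝ by f(x) := min{0, h(x)} − g(x) + |x|, where g(x) := ∫₀ˣ 2u·sin(1/u) du (integrand understood as 0 at u = 0) and h(x) := x²·sin(1/x) for x ≠ 0, h(0) := 0. Then for every x ∈ (0, 1/π) the left derivative f′₋(x) exists and satisfies f′₋(x) > 0, and for every x ∈ (−1/π, 0) the right derivative f′₊(x) exists and satisfies f′₊(x) < 0. Consequently f has no stationary point in (−1/π, 1/π) \ {0}. -/

import Mathlib

open Filter Metric Set Real Topology

noncomputable section

/-- Left derivative `f′₋(x) = d`: `(f y - f x)/(y - x) → d` as `y ↑ x`. -/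
def HasLeftDeriv (f : ℝ → ℝ) (x d : ℝ) : Prop :=
  Filter.Tendsto (fun y : ℝ => (f y - f x) / (y - x)) (nhdsWithin x (Set.Iio x)) (nhds d)

/-- Right derivative `f′₊(x) = d`: `(f y - f x)/(y - x) → d` as `y ↓ x`. -/
def HasRightDeriv (f : ℝ → ℝ) (x d : ℝ) : Prop :=
  Filter.Tendsto (fun y : ℝ => (f y - f x) / (y - x)) (nhdsWithin x (Set.Ioi x)) (nhds d)

/-- `x` is a `δ`-stationary point of `f : ℝ → ℝ`: `f′₋(x) ≤ δ` and `f′₊(x) ≥ -δ`. -/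
def IsDeltaStationaryPt1 (f : ℝ → ℝ) (δ x : ℝ) : Prop :=
  ∃ dm dp : ℝ, HasLeftDeriv f x dm ∧ HasRightDeriv f x dp ∧ dm ≤ δ ∧ -δ ≤ dp

/-- `x` is a stationary point of `f : ℝ → ℝ`: `f′₋(x) ≤ 0` and `f′₊(x) ≥ 0`. -/
def IsStationaryPt1 (f : ℝ → ℝ) (x : ℝ) : Prop :=
  IsDeltaStationaryPt1 f 0 x

/-- `g(x) = ∫₀ˣ 2u sin(1/u) du`, with the integrand extended by `0` at `u = 0`. -/
def gEx (x : ℝ) : ℝ := ∫ u in (0 : ℝ)..x, if u = 0 then 0 else 2 * u * Real.sin (1 / u)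

/-- `h(x) = x² sin(1/x)` for `x ≠ 0`, `h(0) = 0`. -/
def hEx (x : ℝ) : ℝ := if x = 0 then 0 else x ^ 2 * Real.sin (1 / x)

/-- `f(x) = min {0, h(x)} - g(x) + |x|`. -/
def fEx (x : ℝ) : ℝ := min 0 (hEx x) - gEx x + |x|

/-! ### Auxiliary lemmas -/

/-- The integrand of `gEx`. -/
def psiEx (u : ℝ) : ℝ := if u = 0 then 0 else 2 * u * Real.sin (1 / u)

lemma psiEx_continuous : Continuous psiEx := by
  rw [continuous_iff_continuousAt]
  intro x
  rcases eq_or_ne x 0 with rfl | hx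
  · have h0 : psiEx 0 = 0 := by simp [psiEx]
    rw [ContinuousAt, h0]
    apply squeeze_zero_norm (a := fun u : ℝ => 2 * |u|)
    · intro u
      unfold psiEx
      split_ifs with hu
      · simp
      · rw [Real.norm_eq_abs, abs_mul, abs_mul]
        have h1 : |Real.sin (1 / u)| ≤ 1 := Real.abs_sin_le_one _
        have h2 : (0:ℝ) ≤ |(2:ℝ)| * |u| := by positivity
        calc |(2:ℝ)| * |u| * |Real.sin (1/u)| ≤ |(2:ℝ)| * |u| * 1 :=
              mul_le_mul_of_nonneg_left h1 h2
          _ = 2 * |u| := by simp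
    · have : Continuous (fun u : ℝ => 2 * |u|) := by continuity
      simpa using this.tendsto 0
  · have hev : psiEx =ᶠ[𝓝 x] fun u => 2 * u * Real.sin (1 / u) := by
      filter_upwards [eventually_ne_nhds hx] with u hu
      simp [psiEx, hu]
    have hc : ContinuousAt (fun u : ℝ => 2 * u * Real.sin (1 / u)) x :=
      ((continuousAt_const.mul continuousAt_id).mul
        (Real.continuous_sin.continuousAt.comp (continuousAt_const.div continuousAt_id hx)))
    exact hc.congr hev.symm

lemma gEx_hasDerivAt (x : ℝ) : HasDerivAt gEx (psiEx x) x :=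
  (psiEx_continuous.integral_hasStrictDerivAt 0 x).hasDerivAt

lemma psiEx_ne (x : ℝ) (hx : x ≠ 0) : psiEx x = 2 * x * Real.sin (1 / x) := by
  simp [psiEx, hx]

lemma HasDerivAt.hasLeftDeriv' {f : ℝ → ℝ} {x d : ℝ} (h : HasDerivAt f d x) :
    HasLeftDeriv f x d := by
  have h1 : Tendsto (slope f x) (𝓝[≠] x) (𝓝 d) := hasDerivAt_iff_tendsto_slope.1 h
  have h2 := h1.mono_left (nhdsWithin_mono x (fun y (hy : y ∈ Set.Iio x) => ne_of_lt hy))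
  exact h2.congr (fun y => slope_def_field f x y)

lemma HasDerivAt.hasRightDeriv' {f : ℝ → ℝ} {x d : ℝ} (h : HasDerivAt f d x) :
    HasRightDeriv f x d := by
  have h1 : Tendsto (slope f x) (𝓝[≠] x) (𝓝 d) := hasDerivAt_iff_tendsto_slope.1 h
  have h2 := h1.mono_left (nhdsWithin_mono x (fun y (hy : y ∈ Set.Ioi x) => ne_of_gt hy))
  exact h2.congr (fun y => slope_def_field f x y)

lemma hasLeftDeriv_congr {f₁ f₂ : ℝ → ℝ} {x d : ℝ}
    (hev : ∀ᶠ y in 𝓝[<] x, f₁ y = f₂ y) (hx : f₁ x = f₂ x)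
    (h : HasLeftDeriv f₂ x d) : HasLeftDeriv f₁ x d := by
  refine Filter.Tendsto.congr' ?_ h
  filter_upwards [hev] with y hy
  rw [hy, hx]

lemma hasRightDeriv_congr {f₁ f₂ : ℝ → ℝ} {x d : ℝ}
    (hev : ∀ᶠ y in 𝓝[>] x, f₁ y = f₂ y) (hx : f₁ x = f₂ x)
    (h : HasRightDeriv f₂ x d) : HasRightDeriv f₁ x d := by
  refine Filter.Tendsto.congr' ?_ h
  filter_upwards [hev] with y hy
  rw [hy, hx]

lemma ev_left_of_deriv_neg {φ : ℝ → ℝ} {x d : ℝ} (h : HasDerivAt φ d x) (hd : d < 0) :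
    ∀ᶠ y in 𝓝[<] x, φ x < φ y := by
  have h1 : Tendsto (slope φ x) (𝓝[≠] x) (𝓝 d) := hasDerivAt_iff_tendsto_slope.1 h
  have h2 : ∀ᶠ y in 𝓝[≠] x, slope φ x y < 0 := h1.eventually_lt_const hd
  have h3 := h2.filter_mono (nhdsWithin_mono x (fun y (hy : y ∈ Set.Iio x) => ne_of_lt hy))
  filter_upwards [h3, self_mem_nhdsWithin] with y h4 h5
  rw [slope_def_field] at h4
  have h6 : y < x := h5
  rcases div_neg_iff.1 h4 with ⟨ha, _⟩ | ⟨_, hb⟩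
  · linarith
  · linarith

lemma ev_left_of_deriv_pos {φ : ℝ → ℝ} {x d : ℝ} (h : HasDerivAt φ d x) (hd : 0 < d) :
    ∀ᶠ y in 𝓝[<] x, φ y < φ x := by
  have h1 : Tendsto (slope φ x) (𝓝[≠] x) (𝓝 d) := hasDerivAt_iff_tendsto_slope.1 h
  have h2 : ∀ᶠ y in 𝓝[≠] x, 0 < slope φ x y := h1.eventually_const_lt hd
  have h3 := h2.filter_mono (nhdsWithin_mono x (fun y (hy : y ∈ Set.Iio x) => ne_of_lt hy))
  filter_upwards [h3, self_mem_nhdsWithin] with y h4 h5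
  rw [slope_def_field] at h4
  have h6 : y < x := h5
  rcases div_pos_iff.1 h4 with ⟨_, hb⟩ | ⟨ha, _⟩
  · linarith
  · linarith

lemma ev_right_of_deriv_neg {φ : ℝ → ℝ} {x d : ℝ} (h : HasDerivAt φ d x) (hd : d < 0) :
    ∀ᶠ y in 𝓝[>] x, φ y < φ x := by
  have h1 : Tendsto (slope φ x) (𝓝[≠] x) (𝓝 d) := hasDerivAt_iff_tendsto_slope.1 h
  have h2 : ∀ᶠ y in 𝓝[≠] x, slope φ x y < 0 := h1.eventually_lt_const hd
  have h3 := h2.filter_mono (nhdsWithin_mono x (fun y (hy : y ∈ Set.Ioi x) => ne_of_gt hy))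
  filter_upwards [h3, self_mem_nhdsWithin] with y h4 h5
  rw [slope_def_field] at h4
  have h6 : x < y := h5
  rcases div_neg_iff.1 h4 with ⟨_, hb⟩ | ⟨ha, _⟩
  · linarith
  · linarith

lemma ev_right_of_deriv_pos {φ : ℝ → ℝ} {x d : ℝ} (h : HasDerivAt φ d x) (hd : 0 < d) :
    ∀ᶠ y in 𝓝[>] x, φ x < φ y := by
  have h1 : Tendsto (slope φ x) (𝓝[≠] x) (𝓝 d) := hasDerivAt_iff_tendsto_slope.1 h
  have h2 : ∀ᶠ y in 𝓝[≠] x, 0 < slope φ x y := h1.eventually_const_lt hd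
  have h3 := h2.filter_mono (nhdsWithin_mono x (fun y (hy : y ∈ Set.Ioi x) => ne_of_gt hy))
  filter_upwards [h3, self_mem_nhdsWithin] with y h4 h5
  rw [slope_def_field] at h4
  have h6 : x < y := h5
  rcases div_pos_iff.1 h4 with ⟨ha, _⟩ | ⟨_, hb⟩
  · linarith
  · linarith

lemma sin_inv_hasDerivAt {x : ℝ} (hx : x ≠ 0) :
    HasDerivAt (fun y : ℝ => Real.sin (1 / y)) (Real.cos (1 / x) * -(x ^ 2)⁻¹) x := by
  have h1 : HasDerivAt (fun y : ℝ => 1 / y) (-(x ^ 2)⁻¹) x := by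
    simpa [one_div] using hasDerivAt_inv hx
  exact h1.sin

lemma sq_sin_inv_hasDerivAt {x : ℝ} (hx : x ≠ 0) :
    HasDerivAt (fun y : ℝ => y ^ 2 * Real.sin (1 / y))
      (2 * x * Real.sin (1 / x) - Real.cos (1 / x)) x := by
  have h2 := (hasDerivAt_pow 2 x).mul (sin_inv_hasDerivAt hx)
  refine h2.congr_deriv ?_
  have hx2 : x ^ 2 ≠ 0 := pow_ne_zero 2 hx
  field_simp
  ring

/-- Scenario A on the left: `hEx ≥ 0` on a left-neighborhood and at `x > 0`. -/
lemma leftA {x : ℝ} (hx : 0 < x) (hx0 : 0 ≤ hEx x)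
    (hev : ∀ᶠ y in 𝓝[<] x, 0 ≤ hEx y) :
    HasLeftDeriv fEx x (1 - psiEx x) := by
  have hF : HasDerivAt (fun y : ℝ => y - gEx y) (1 - psiEx x) x :=
    (hasDerivAt_id x).sub (gEx_hasDerivAt x)
  refine hasLeftDeriv_congr (f₂ := fun y => y - gEx y) ?_ ?_ hF.hasLeftDeriv'
  · have hpos : ∀ᶠ y in 𝓝[<] x, 0 < y :=
      (eventually_gt_nhds hx).filter_mono nhdsWithin_le_nhds
    filter_upwards [hev, hpos] with y h1 h2
    simp only [fEx, min_eq_left h1, abs_of_pos h2]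
    ring
  · simp only [fEx, min_eq_left hx0, abs_of_pos hx]
    ring

/-- Scenario B on the left: `hEx ≤ 0` on a left-neighborhood and at `x > 0`. -/
lemma leftB {x : ℝ} (hx : 0 < x) (hx0 : hEx x ≤ 0)
    (hev : ∀ᶠ y in 𝓝[<] x, hEx y ≤ 0) :
    HasLeftDeriv fEx x (1 - Real.cos (1 / x)) := by
  have hxne : x ≠ 0 := ne_of_gt hx
  have hF : HasDerivAt (fun y : ℝ => y ^ 2 * Real.sin (1 / y) - gEx y + y)
      ((2 * x * Real.sin (1 / x) - Real.cos (1 / x)) - psiEx x + 1) x :=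
    ((sq_sin_inv_hasDerivAt hxne).sub (gEx_hasDerivAt x)).add (hasDerivAt_id x)
  have hd : (2 * x * Real.sin (1 / x) - Real.cos (1 / x)) - psiEx x + 1
      = 1 - Real.cos (1 / x) := by
    rw [psiEx_ne x hxne]; ring
  rw [hd] at hF
  refine hasLeftDeriv_congr (f₂ := fun y => y ^ 2 * Real.sin (1 / y) - gEx y + y)
    ?_ ?_ hF.hasLeftDeriv'
  · have hpos : ∀ᶠ y in 𝓝[<] x, 0 < y :=
      (eventually_gt_nhds hx).filter_mono nhdsWithin_le_nhds
    filter_upwards [hev, hpos] with y h1 h2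
    unfold fEx
    rw [min_eq_right h1, abs_of_pos h2]
    unfold hEx
    rw [if_neg (ne_of_gt h2)]
  · unfold fEx
    rw [min_eq_right hx0, abs_of_pos hx]
    unfold hEx
    rw [if_neg hxne]

/-- Scenario A on the right: `hEx ≥ 0` on a right-neighborhood and at `x < 0`. -/
lemma rightA {x : ℝ} (hx : x < 0) (hx0 : 0 ≤ hEx x)
    (hev : ∀ᶠ y in 𝓝[>] x, 0 ≤ hEx y) :
    HasRightDeriv fEx x (-psiEx x - 1) := by
  have hF : HasDerivAt (fun y : ℝ => -gEx y - y) (-psiEx x - 1) x :=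
    (gEx_hasDerivAt x).neg.sub (hasDerivAt_id x)
  refine hasRightDeriv_congr (f₂ := fun y => -gEx y - y) ?_ ?_ hF.hasRightDeriv'
  · have hneg : ∀ᶠ y in 𝓝[>] x, y < 0 :=
      (eventually_lt_nhds hx).filter_mono nhdsWithin_le_nhds
    filter_upwards [hev, hneg] with y h1 h2
    simp only [fEx, min_eq_left h1, abs_of_neg h2]
    ring
  · simp only [fEx, min_eq_left hx0, abs_of_neg hx]
    ring

/-- Scenario B on the right: `hEx ≤ 0` on a right-neighborhood and at `x < 0`. -/
lemma rightB {x : ℝ} (hx : x < 0) (hx0 : hEx x ≤ 0)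
    (hev : ∀ᶠ y in 𝓝[>] x, hEx y ≤ 0) :
    HasRightDeriv fEx x (-Real.cos (1 / x) - 1) := by
  have hxne : x ≠ 0 := ne_of_lt hx
  have hF : HasDerivAt (fun y : ℝ => y ^ 2 * Real.sin (1 / y) - gEx y - y)
      ((2 * x * Real.sin (1 / x) - Real.cos (1 / x)) - psiEx x - 1) x :=
    ((sq_sin_inv_hasDerivAt hxne).sub (gEx_hasDerivAt x)).sub (hasDerivAt_id x)
  have hd : (2 * x * Real.sin (1 / x) - Real.cos (1 / x)) - psiEx x - 1
      = -Real.cos (1 / x) - 1 := by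
    rw [psiEx_ne x hxne]; ring
  rw [hd] at hF
  refine hasRightDeriv_congr (f₂ := fun y => y ^ 2 * Real.sin (1 / y) - gEx y - y)
    ?_ ?_ hF.hasRightDeriv'
  · have hneg : ∀ᶠ y in 𝓝[>] x, y < 0 :=
      (eventually_lt_nhds hx).filter_mono nhdsWithin_le_nhds
    filter_upwards [hev, hneg] with y h1 h2
    unfold fEx
    rw [min_eq_right h1, abs_of_neg h2]
    unfold hEx
    rw [if_neg (ne_of_lt h2)]
    ring
  · unfold fEx
    rw [min_eq_right hx0, abs_of_neg hx]
    unfold hEx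
    rw [if_neg hxne]
    ring

lemma sin_inv_continuousAt {x : ℝ} (hx : x ≠ 0) :
    ContinuousAt (fun y : ℝ => Real.sin (1 / y)) x :=
  Real.continuous_sin.continuousAt.comp (continuousAt_const.div continuousAt_id hx)

lemma half_pi_lt : (1 : ℝ) / Real.pi < 1 / 2 := by
  have : (2 : ℝ) < Real.pi := by nlinarith [Real.pi_gt_three]
  exact one_div_lt_one_div_of_lt (by norm_num) this

/-- On `(0, 1/π)` the left derivative of `f` exists and is positive; on `(-1/π, 0)`
the right derivative exists and is negative; consequently `f` has no stationary
point in `(-1/π, 1/π) \ {0}`. -/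
theorem fEx_no_stationary_off_zero :
    (∀ x ∈ Set.Ioo (0 : ℝ) (1 / Real.pi), ∃ d : ℝ, HasLeftDeriv fEx x d ∧ 0 < d) ∧
    (∀ x ∈ Set.Ioo (-(1 / Real.pi)) (0 : ℝ), ∃ d : ℝ, HasRightDeriv fEx x d ∧ d < 0) ∧
    (∀ x ∈ Set.Ioo (-(1 / Real.pi)) (1 / Real.pi), x ≠ 0 → ¬ IsStationaryPt1 fEx x) := by
  have P1 : ∀ x ∈ Set.Ioo (0 : ℝ) (1 / Real.pi), ∃ d : ℝ, HasLeftDeriv fEx x d ∧ 0 < d := by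
    rintro x ⟨hx0, hx1⟩
    have hxne : x ≠ 0 := ne_of_gt hx0
    have hxhalf : x < 1 / 2 := lt_trans hx1 half_pi_lt
    have hhx : hEx x = x ^ 2 * Real.sin (1 / x) := by simp [hEx, hxne]
    rcases lt_trichotomy (Real.sin (1 / x)) 0 with hs | hs | hs
    · -- sin (1/x) < 0 : scenario B
      have hev : ∀ᶠ y in 𝓝[<] x, hEx y ≤ 0 := by
        have hcont : ∀ᶠ y in 𝓝 x, Real.sin (1 / y) < 0 :=
          ((sin_inv_continuousAt hxne).eventually_lt_const hs)
        filter_upwards [hcont.filter_mono nhdsWithin_le_nhds,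
          (eventually_gt_nhds hx0).filter_mono nhdsWithin_le_nhds] with y h1 h2
        have : hEx y = y ^ 2 * Real.sin (1 / y) := by simp [hEx, ne_of_gt h2]
        nlinarith [sq_nonneg y]
      refine ⟨1 - Real.cos (1 / x), leftB hx0 (by nlinarith [sq_nonneg x]) hev, ?_⟩
      nlinarith [Real.sin_sq_add_cos_sq (1 / x), Real.cos_le_one (1 / x),
        pow_two_pos_of_ne_zero (ne_of_lt hs)]
    · -- sin (1/x) = 0
      have hc : Real.cos (1 / x) ≠ 0 := by
        intro h
        have := Real.sin_sq_add_cos_sq (1 / x)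
        rw [hs, h] at this; norm_num at this
      have hder := sin_inv_hasDerivAt hxne
      have hx2 : 0 < (x ^ 2)⁻¹ := by positivity
      rcases hc.lt_or_gt with hcneg | hcpos
      · -- cos < 0 : sin (1/y) < 0 on the left, scenario B
        have hd0 : 0 < Real.cos (1 / x) * -(x ^ 2)⁻¹ := mul_pos_of_neg_of_neg hcneg (by linarith)
        have hev0 := ev_left_of_deriv_pos hder hd0
        have hev : ∀ᶠ y in 𝓝[<] x, hEx y ≤ 0 := by
          filter_upwards [hev0, (eventually_gt_nhds hx0).filter_mono nhdsWithin_le_nhds]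
            with y h1 h2
          rw [hs] at h1
          have : hEx y = y ^ 2 * Real.sin (1 / y) := by simp [hEx, ne_of_gt h2]
          nlinarith [sq_nonneg y]
        refine ⟨1 - Real.cos (1 / x), leftB hx0 (by rw [hhx, hs]; ring_nf; exact le_refl 0) hev, ?_⟩
        linarith
      · -- cos > 0 : sin (1/y) > 0 on the left, scenario A
        have hd0 : Real.cos (1 / x) * -(x ^ 2)⁻¹ < 0 := mul_neg_of_pos_of_neg hcpos (by linarith)
        have hev0 := ev_left_of_deriv_neg hder hd0
        have hev : ∀ᶠ y in 𝓝[<] x, 0 ≤ hEx y := by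
          filter_upwards [hev0, (eventually_gt_nhds hx0).filter_mono nhdsWithin_le_nhds]
            with y h1 h2
          rw [hs] at h1
          have : hEx y = y ^ 2 * Real.sin (1 / y) := by simp [hEx, ne_of_gt h2]
          nlinarith [sq_nonneg y]
        refine ⟨1 - psiEx x, leftA hx0 (by rw [hhx, hs]; ring_nf; exact le_refl 0) hev, ?_⟩
        rw [psiEx_ne x hxne, hs]
        norm_num
    · -- sin (1/x) > 0 : scenario A
      have hev : ∀ᶠ y in 𝓝[<] x, 0 ≤ hEx y := by
        have hcont : ∀ᶠ y in 𝓝 x, 0 < Real.sin (1 / y) :=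
          ((sin_inv_continuousAt hxne).eventually_const_lt hs)
        filter_upwards [hcont.filter_mono nhdsWithin_le_nhds,
          (eventually_gt_nhds hx0).filter_mono nhdsWithin_le_nhds] with y h1 h2
        have : hEx y = y ^ 2 * Real.sin (1 / y) := by simp [hEx, ne_of_gt h2]
        nlinarith [sq_nonneg y]
      refine ⟨1 - psiEx x, leftA hx0 (by nlinarith [sq_nonneg x]) hev, ?_⟩
      rw [psiEx_ne x hxne]
      nlinarith [Real.sin_le_one (1 / x)]
  have P2 : ∀ x ∈ Set.Ioo (-(1 / Real.pi)) (0 : ℝ),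
      ∃ d : ℝ, HasRightDeriv fEx x d ∧ d < 0 := by
    rintro x ⟨hx0, hx1⟩
    have hxne : x ≠ 0 := ne_of_lt hx1
    have hxhalf : -(1 / 2 : ℝ) < x := by
      have := half_pi_lt; linarith
    have hhx : hEx x = x ^ 2 * Real.sin (1 / x) := by simp [hEx, hxne]
    rcases lt_trichotomy (Real.sin (1 / x)) 0 with hs | hs | hs
    · -- sin (1/x) < 0 : scenario B
      have hev : ∀ᶠ y in 𝓝[>] x, hEx y ≤ 0 := by
        have hcont : ∀ᶠ y in 𝓝 x, Real.sin (1 / y) < 0 :=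
          ((sin_inv_continuousAt hxne).eventually_lt_const hs)
        filter_upwards [hcont.filter_mono nhdsWithin_le_nhds,
          (eventually_lt_nhds hx1).filter_mono nhdsWithin_le_nhds] with y h1 h2
        have : hEx y = y ^ 2 * Real.sin (1 / y) := by simp [hEx, ne_of_lt h2]
        nlinarith [sq_nonneg y]
      refine ⟨-Real.cos (1 / x) - 1, rightB hx1 (by nlinarith [sq_nonneg x]) hev, ?_⟩
      nlinarith [Real.sin_sq_add_cos_sq (1 / x), Real.neg_one_le_cos (1 / x),
        pow_two_pos_of_ne_zero (ne_of_lt hs)]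
    · -- sin (1/x) = 0
      have hc : Real.cos (1 / x) ≠ 0 := by
        intro h
        have := Real.sin_sq_add_cos_sq (1 / x)
        rw [hs, h] at this; norm_num at this
      have hder := sin_inv_hasDerivAt hxne
      have hx2 : 0 < (x ^ 2)⁻¹ := by positivity
      rcases hc.lt_or_gt with hcneg | hcpos
      · -- cos < 0 : sin (1/y) > 0 on the right, scenario A
        have hd0 : 0 < Real.cos (1 / x) * -(x ^ 2)⁻¹ := mul_pos_of_neg_of_neg hcneg (by linarith)
        have hev0 := ev_right_of_deriv_pos hder hd0
        have hev : ∀ᶠ y in 𝓝[>] x, 0 ≤ hEx y := by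
          filter_upwards [hev0, (eventually_lt_nhds hx1).filter_mono nhdsWithin_le_nhds]
            with y h1 h2
          rw [hs] at h1
          have : hEx y = y ^ 2 * Real.sin (1 / y) := by simp [hEx, ne_of_lt h2]
          nlinarith [sq_nonneg y]
        refine ⟨-psiEx x - 1, rightA hx1 (by rw [hhx, hs]; ring_nf; exact le_refl 0) hev, ?_⟩
        rw [psiEx_ne x hxne, hs]
        norm_num
      · -- cos > 0 : sin (1/y) < 0 on the right, scenario B
        have hd0 : Real.cos (1 / x) * -(x ^ 2)⁻¹ < 0 := mul_neg_of_pos_of_neg hcpos (by linarith)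
        have hev0 := ev_right_of_deriv_neg hder hd0
        have hev : ∀ᶠ y in 𝓝[>] x, hEx y ≤ 0 := by
          filter_upwards [hev0, (eventually_lt_nhds hx1).filter_mono nhdsWithin_le_nhds]
            with y h1 h2
          rw [hs] at h1
          have : hEx y = y ^ 2 * Real.sin (1 / y) := by simp [hEx, ne_of_lt h2]
          nlinarith [sq_nonneg y]
        refine ⟨-Real.cos (1 / x) - 1, rightB hx1 (by rw [hhx, hs]; ring_nf; exact le_refl 0) hev, ?_⟩
        linarith
    · -- sin (1/x) > 0 : scenario A
      have hev : ∀ᶠ y in 𝓝[>] x, 0 ≤ hEx y := by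
        have hcont : ∀ᶠ y in 𝓝 x, 0 < Real.sin (1 / y) :=
          ((sin_inv_continuousAt hxne).eventually_const_lt hs)
        filter_upwards [hcont.filter_mono nhdsWithin_le_nhds,
          (eventually_lt_nhds hx1).filter_mono nhdsWithin_le_nhds] with y h1 h2
        have : hEx y = y ^ 2 * Real.sin (1 / y) := by simp [hEx, ne_of_lt h2]
        nlinarith [sq_nonneg y]
      refine ⟨-psiEx x - 1, rightA hx1 (by nlinarith [sq_nonneg x]) hev, ?_⟩
      rw [psiEx_ne x hxne]
      nlinarith [Real.sin_le_one (1 / x)]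
  refine ⟨P1, P2, ?_⟩
  rintro x ⟨hx0, hx1⟩ hne hstat
  obtain ⟨dm, dp, hdm, hdp, h1, h2⟩ := hstat
  rcases hne.lt_or_gt with hneg | hpos
  · obtain ⟨d, hd, hdneg⟩ := P2 x ⟨hx0, hneg⟩
    have heq : dp = d := tendsto_nhds_unique hdp hd
    rw [neg_zero] at h2
    linarith
  · obtain ⟨d, hd, hdpos⟩ := P1 x ⟨hpos, hx1⟩
    have heq : dm = d := tendsto_nhds_unique hdm hd
    linarith
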